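/- Let k have characteristic zero, m ≥ 2, n = 2m, σ(x_i) = x_{2m-i+1} the coordinate-reversing automorphism, and f = D(f')^2 - 2·D^2(f')·f' with D, f' as above. Then σ(f) = f, and consequently D'(f) = 0 where D' = σ ∘ D ∘ σ. -/

import Mathlib

open MvPolynomial Finset

set_option maxHeartbeats 2000000 in

theorem sigma_fixes_f_even (k : Type*) [Field k] [CharZero k] (m : ℕ) (hm : 2 ≤ m)
    (D : Derivation k (MvPolynomial (Fin (2*m)) k) (MvPolynomial (Fin (2*m)) k))
    (hD : ∀ j : Fin (2*m), D (X j) =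
      if h : (j : ℕ) + 1 < 2*m then ((2*m) - ((j : ℕ) + 1)) • X (⟨(j : ℕ) + 1, h⟩ : Fin (2*m)) else 0)
    (D' : Derivation k (MvPolynomial (Fin (2*m)) k) (MvPolynomial (Fin (2*m)) k))
    (hD' : ∀ j : Fin (2*m), D' (X j) =
      if h : 0 < (j : ℕ) then (j : ℕ) • X (⟨(j : ℕ) - 1, by omega⟩ : Fin (2*m)) else 0)
    (σ : MvPolynomial (Fin (2*m)) k ≃ₐ[k] MvPolynomial (Fin (2*m)) k)
    (hσ : ∀ i : Fin (2*m), σ (X i) = X i.rev)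
    (hconj : ∀ p, D' p = σ (D (σ p)))
    (f' : MvPolynomial (Fin (2*m)) k)
    (hf' : f' = (2:k)⁻¹ • ∑ i : Fin (2*m),
      (((-1:k) ^ (i : ℕ)) * (Nat.choose (2*m-2) (i : ℕ) : k)) •
        (X i * X (⟨2*m-2-(i : ℕ), by omega⟩ : Fin (2*m))))
    (f : MvPolynomial (Fin (2*m)) k)
    (hf : f = (D f')^2 - 2 * ((⇑D)^[2] f') * f') :
    σ f = f ∧ D' f = 0 := by
  -- the indexed generators, extended by zero
  set e : ℕ → MvPolynomial (Fin (2*m)) k :=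
    fun i => if h : i < 2*m then X ⟨i, h⟩ else 0 with he
  have hDe : ∀ i : ℕ, D (e i) = ((2*m - 1 - i : ℕ) : k) • e (i+1) := by
    intro i
    by_cases h : i < 2*m
    · simp only [he, dif_pos h]
      rw [hD ⟨i, h⟩]
      by_cases h2 : i + 1 < 2*m
      · simp only [dif_pos h2]
        rw [show 2*m - (i+1) = 2*m - 1 - i by omega, ← Nat.cast_smul_eq_nsmul k]
      · simp only [dif_neg h2]
        have : 2*m - 1 - i = 0 := by omega
        simp [this]
    · have h1 : ¬ (i + 1 < 2*m) := by omega
      have : 2*m - 1 - i = 0 := by omega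
      simp [he, dif_neg h, dif_neg h1, this]
  have hD'e : ∀ i : ℕ, i < 2*m → D' (e i) = ((i : ℕ) : k) • e (i-1) := by
    intro i h
    simp only [he, dif_pos h]
    rw [hD' ⟨i, h⟩]
    by_cases h0 : 0 < i
    · simp only [dif_pos h0]
      rw [← Nat.cast_smul_eq_nsmul k]
      have : i - 1 < 2*m := by omega
      simp only [dif_pos this]
    · simp only [dif_neg h0]
      have : i = 0 := by omega
      simp [this]
  have hσe : ∀ i : ℕ, i < 2*m → σ (e i) = e (2*m - 1 - i) := by
    intro i h
    have h2 : 2*m - 1 - i < 2*m := by omega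
    simp only [he, dif_pos h, dif_pos h2]
    rw [hσ ⟨i, h⟩]
    congr 1
    ext
    simp [Fin.val_rev]
    omega
  have hσσ : ∀ p : MvPolynomial (Fin (2*m)) k, σ (σ p) = p := by
    have h : (σ.toAlgHom.comp σ.toAlgHom) = AlgHom.id k (MvPolynomial (Fin (2*m)) k) :=
      MvPolynomial.algHom_ext (fun i => by simp [hσ, Fin.rev_rev])
    intro p
    have := congrArg (fun φ => φ p) h
    simpa using this
  -- sum splitting helpers
  have hsucc' : ∀ (N : ℕ), 1 ≤ N → ∀ (F : ℕ → MvPolynomial (Fin (2*m)) k),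
      ∑ i ∈ range N, F i = (∑ i ∈ range (N-1), F (i+1)) + F 0 := by
    intro N hN F
    obtain ⟨M, rfl⟩ : ∃ M, N = M + 1 := ⟨N - 1, by omega⟩
    simp [Finset.sum_range_succ']
  have hsucc : ∀ (N : ℕ), 1 ≤ N → ∀ (F : ℕ → MvPolynomial (Fin (2*m)) k),
      ∑ i ∈ range N, F i = (∑ i ∈ range (N-1), F i) + F (N-1) := by
    intro N hN F
    obtain ⟨M, rfl⟩ : ∃ M, N = M + 1 := ⟨N - 1, by omega⟩
    simp [Finset.sum_range_succ]
  -- coefficients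
  set c : ℕ → k := fun i => (-1)^i * ((2*m-2).choose i : k) with hc
  set d : ℕ → k := fun i =>
    c i * ((i+1 : ℕ) : k) + (if i = 0 then 0 else c (i-1) * ((2*m - i : ℕ) : k)) with hd
  have hc0 : c (2*m-1) = 0 := by
    simp [hc, Nat.choose_eq_zero_of_lt (show 2*m-2 < 2*m-1 by omega)]
  -- the three quadratics
  set S : MvPolynomial (Fin (2*m)) k :=
    ∑ i ∈ range (2*m-1), c i • (e i * e (2*m-2-i)) with hS
  set H : MvPolynomial (Fin (2*m)) k :=
    ∑ i ∈ range (2*m-1), c i • (e (2*m-1-i) * e (i+1)) with hH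
  set T : MvPolynomial (Fin (2*m)) k :=
    ∑ i ∈ range (2*m), d i • (e i * e (2*m-1-i)) with hT
  -- f' in terms of S
  have hfS : f' = (2:k)⁻¹ • S := by
    rw [hf']
    congr 1
    have hbig : ∑ i : Fin (2*m),
        (((-1:k) ^ (i : ℕ)) * (Nat.choose (2*m-2) (i : ℕ) : k)) •
          (X i * X (⟨2*m-2-(i : ℕ), by omega⟩ : Fin (2*m)))
        = ∑ i ∈ range (2*m), c i • (e i * e (2*m-2-i)) := by
      rw [← Fin.sum_univ_eq_sum_range (fun i => c i • (e i * e (2*m-2-i))) (2*m)]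
      apply Finset.sum_congr rfl
      intro i _
      have h1 : (i : ℕ) < 2*m := i.isLt
      have h2 : 2*m-2-(i:ℕ) < 2*m := by omega
      simp only [he, hc, dif_pos h1, dif_pos h2]
    rw [hbig, hsucc (2*m) (by omega), hc0]
    simp
    rfl
  -- sigma of f'
  have hσS : σ S = H := by
    rw [hS, map_sum]
    apply Finset.sum_congr rfl
    intro i hi
    rw [Finset.mem_range] at hi
    rw [map_smul, map_mul, hσe i (by omega), hσe (2*m-2-i) (by omega),
      show 2*m-1-(2*m-2-i) = i+1 by omega]
  have hσf' : σ f' = (2:k)⁻¹ • H := by rw [hfS, map_smul, hσS]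
  -- the two halves U and V
  set U : MvPolynomial (Fin (2*m)) k :=
    ∑ i ∈ range (2*m-1), (c i * ((i+1 : ℕ) : k)) • (e i * e (2*m-1-i)) with hU
  set V : MvPolynomial (Fin (2*m)) k :=
    ∑ i ∈ range (2*m-1), (c i * ((2*m-1-i : ℕ) : k)) • (e (i+1) * e (2*m-2-i)) with hV
  have hUVT : U + V = T := by
    have hText : T = (∑ i ∈ range (2*m-1), d (i+1) • (e (i+1) * e (2*m-2-i))) +
        d 0 • (e 0 * e (2*m-1)) := by
      rw [hT, hsucc' (2*m) (by omega) (fun i => d i • (e i * e (2*m-1-i)))]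
      congr 1
      apply Finset.sum_congr rfl
      intro i _
      rw [show 2*m-1-(i+1) = 2*m-2-i by omega]
    have hUext : U = (∑ i ∈ range (2*m-1), (c (i+1) * ((i+2 : ℕ) : k)) •
        (e (i+1) * e (2*m-2-i))) + (c 0 * ((1:ℕ):k)) • (e 0 * e (2*m-1)) := by
      have h1 : ∑ i ∈ range (2*m), (c i * ((i+1 : ℕ) : k)) • (e i * e (2*m-1-i)) = U := by
        rw [hsucc (2*m) (by omega), hc0]
        simp only [zero_mul, zero_smul, add_zero]
        rfl
      rw [← h1, hsucc' (2*m) (by omega) (fun i => (c i * ((i+1 : ℕ) : k)) • (e i * e (2*m-1-i)))]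
      congr 1
      apply Finset.sum_congr rfl
      intro i _
      rw [show 2*m-1-(i+1) = 2*m-2-i by omega]
    rw [hUext, hText, hV]
    rw [add_right_comm, ← Finset.sum_add_distrib]
    congr 1
    · apply Finset.sum_congr rfl
      intro i hi
      rw [← add_smul]
      congr 1
      rw [hd]
      simp only [Nat.succ_ne_zero, if_neg, Nat.add_sub_cancel]
      rw [show 2*m-(i+1) = 2*m-1-i by omega]
      push_cast
      ring
    · rw [hd]
      simp
  -- D S = U + V
  have hDS : D S = U + V := by
    rw [hS, map_sum, hU, hV, ← Finset.sum_add_distrib]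
    apply Finset.sum_congr rfl
    intro i hi
    rw [Finset.mem_range] at hi
    rw [Derivation.map_smul, Derivation.leibniz, hDe, hDe,
      show 2*m-1-(2*m-2-i) = i+1 by omega, show 2*m-2-i+1 = 2*m-1-i by omega]
    simp only [smul_eq_mul, MvPolynomial.smul_eq_C_mul, map_mul]
    ring
  -- D' H = U + V
  have hD'H : D' H = U + V := by
    rw [hH, map_sum, hU, hV, ← Finset.sum_add_distrib]
    apply Finset.sum_congr rfl
    intro i hi
    rw [Finset.mem_range] at hi
    rw [Derivation.map_smul, Derivation.leibniz, hD'e (2*m-1-i) (by omega), hD'e (i+1) (by omega),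
      show 2*m-1-i-1 = 2*m-2-i by omega, Nat.add_sub_cancel]
    simp only [smul_eq_mul, MvPolynomial.smul_eq_C_mul, map_mul]
    ring
  -- D' S = 0
  have hD'S : D' S = 0 := by
    rw [hS, map_sum]
    have hterm : ∀ i ∈ range (2*m-1), D' (c i • (e i * e (2*m-2-i))) =
        (c i * ((2*m-2-i : ℕ) : k)) • (e i * e (2*m-3-i)) +
        (c i * ((i : ℕ) : k)) • (e (i-1) * e (2*m-2-i)) := by
      intro i hi
      rw [Finset.mem_range] at hi
      rw [Derivation.map_smul, Derivation.leibniz, hD'e (2*m-2-i) (by omega), hD'e i (by omega),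
        show 2*m-2-i-1 = 2*m-3-i by omega]
      simp only [smul_eq_mul, MvPolynomial.smul_eq_C_mul, map_mul]
      ring
    rw [Finset.sum_congr rfl hterm, Finset.sum_add_distrib]
    have hP : ∑ i ∈ range (2*m-1), (c i * ((2*m-2-i : ℕ) : k)) • (e i * e (2*m-3-i)) =
        ∑ i ∈ range (2*m-2), (c i * ((2*m-2-i : ℕ) : k)) • (e i * e (2*m-3-i)) := by
      rw [hsucc (2*m-1) (by omega), show 2*m-1-1 = 2*m-2 by omega]
      rw [show 2*m-2-(2*m-2) = 0 by omega]
      simp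
    have hQ : ∑ i ∈ range (2*m-1), (c i * ((i : ℕ) : k)) • (e (i-1) * e (2*m-2-i)) =
        ∑ i ∈ range (2*m-2), (c (i+1) * ((i+1 : ℕ) : k)) • (e i * e (2*m-3-i)) := by
      rw [hsucc' (2*m-1) (by omega), show 2*m-1-1 = 2*m-2 by omega]
      simp only [Nat.cast_zero, mul_zero, zero_smul, add_zero]
      apply Finset.sum_congr rfl
      intro i _
      rw [show 2*m-2-(i+1) = 2*m-3-i by omega, Nat.add_sub_cancel]
    rw [hP, hQ, ← Finset.sum_add_distrib]
    apply Finset.sum_eq_zero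
    intro i hi
    rw [Finset.mem_range] at hi
    rw [← add_smul]
    convert zero_smul k _
    have hbin : (2*m-2).choose (i+1) * (i+1) = (2*m-2).choose i * (2*m-2-i) :=
      Nat.choose_succ_right_eq (2*m-2) i
    have hbink : ((2*m-2).choose (i+1) : k) * ((i+1 : ℕ) : k) =
        ((2*m-2).choose i : k) * ((2*m-2-i : ℕ) : k) := by exact_mod_cast congrArg (Nat.cast (R := k)) hbin
    rw [hc]
    simp only [pow_succ]
    push_cast at hbink ⊢
    linear_combination (-(-1:k)^i) * hbink
  -- the key identity for D T
  have hkey : ∀ i : ℕ, i < 2*m-1 →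
      d (i+1) * ((i+1 : ℕ) : k) + d i * ((2*m-1-i : ℕ) : k) = 2 * c i := by
    intro i hi
    rcases Nat.eq_zero_or_pos i with rfl | hpos
    · rw [hd]
      simp only [Nat.succ_ne_zero, if_neg, if_pos rfl]
      rw [hc]
      simp only [Nat.sub_zero, Nat.add_sub_cancel, pow_zero, pow_one]
      rw [Nat.choose_one_right, Nat.choose_zero_right]
      have h1 : ((2*m-1 : ℕ) : k) = 2*(m:k) - 1 := by
        push_cast [Nat.cast_sub (show 1 ≤ 2*m by omega)]; ring
      have h2 : ((2*m-2 : ℕ) : k) = 2*(m:k) - 2 := by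
        push_cast [Nat.cast_sub (show 2 ≤ 2*m by omega)]; ring
      rw [show (2*m - 1 : ℕ) = 2*m - 1 from rfl]
      push_cast [h1, h2]
      ring
    · obtain ⟨j, rfl⟩ : ∃ j, i = j + 1 := ⟨i - 1, by omega⟩
      set s : ℕ := 2*m-2-(j+1) with hs
      have hb1 : (2*m-2).choose (j+2) * (j+2) = (2*m-2).choose (j+1) * s :=
        by rw [hs, show 2*m-2-(j+1) = 2*m-2-(j+1) from rfl]
           exact Nat.choose_succ_right_eq (2*m-2) (j+1)
      have hb2 : (2*m-2).choose (j+1) * (j+1) = (2*m-2).choose j * (s+1) := by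
        rw [show s + 1 = 2*m-2-j by omega]
        exact Nat.choose_succ_right_eq (2*m-2) j
      have hb1k : ((2*m-2).choose (j+2) : k) * ((j:k)+2) = ((2*m-2).choose (j+1) : k) * (s:k) := by
        exact_mod_cast congrArg (Nat.cast (R := k)) hb1
      have hb2k : ((2*m-2).choose (j+1) : k) * ((j:k)+1) = ((2*m-2).choose j : k) * ((s:k)+1) := by
        exact_mod_cast congrArg (Nat.cast (R := k)) hb2
      rw [hd]
      simp only [Nat.succ_ne_zero, if_neg, Nat.add_sub_cancel]
      rw [hc]
      rw [show 2*m-(j+1+1) = s+1 by omega, show 2*m-1-(j+1) = s+1 by omega,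
        show 2*m-(j+1) = s+2 by omega]
      simp only [pow_succ]
      push_cast
      linear_combination ((-1:k)^j * ((j:k)+3)) * hb1k + (-(-1:k)^j * ((s:k)+2)) * hb2k
  -- D T = 2 • H
  have hDT : D T = (2:k) • H := by
    rw [hT, map_sum]
    have hterm : ∀ i ∈ range (2*m), D (d i • (e i * e (2*m-1-i))) =
        (d i * ((i : ℕ) : k)) • (e i * e (2*m-i)) +
        (d i * ((2*m-1-i : ℕ) : k)) • (e (i+1) * e (2*m-1-i)) := by
      intro i hi
      rw [Finset.mem_range] at hi
      rw [Derivation.map_smul, Derivation.leibniz, hDe, hDe,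
        show 2*m-1-(2*m-1-i) = i by omega, show 2*m-1-i+1 = 2*m-i by omega]
      simp only [smul_eq_mul, MvPolynomial.smul_eq_C_mul, map_mul]
      ring
    rw [Finset.sum_congr rfl hterm, Finset.sum_add_distrib]
    have hP1 : ∑ i ∈ range (2*m), (d i * ((i : ℕ) : k)) • (e i * e (2*m-i)) =
        ∑ i ∈ range (2*m-1), (d (i+1) * ((i+1 : ℕ) : k)) • (e (i+1) * e (2*m-1-i)) := by
      rw [hsucc' (2*m) (by omega)]
      simp only [Nat.cast_zero, mul_zero, zero_smul, add_zero]
      apply Finset.sum_congr rfl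
      intro i _
      rw [show 2*m-(i+1) = 2*m-1-i by omega]
    have hP2 : ∑ i ∈ range (2*m), (d i * ((2*m-1-i : ℕ) : k)) • (e (i+1) * e (2*m-1-i)) =
        ∑ i ∈ range (2*m-1), (d i * ((2*m-1-i : ℕ) : k)) • (e (i+1) * e (2*m-1-i)) := by
      rw [hsucc (2*m) (by omega), show 2*m-1-(2*m-1) = 0 by omega]
      simp
    rw [hP1, hP2, ← Finset.sum_add_distrib, hH, Finset.smul_sum]
    apply Finset.sum_congr rfl
    intro i hi
    rw [Finset.mem_range] at hi
    rw [← add_smul, hkey i hi, smul_smul]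
    congr 1
    exact mul_comm _ _
  -- assemble everything
  have hDf'2 : D f' = (2:k)⁻¹ • T := by
    rw [hfS, Derivation.map_smul, hDS, hUVT]
  have hσDf' : σ (D f') = D f' := by
    have h1 := hconj (σ f')
    rw [hσσ] at h1
    have h2 : D' (σ f') = (2:k)⁻¹ • T := by
      rw [hσf', Derivation.map_smul, hD'H, hUVT]
    rw [h2] at h1
    rw [← h1, hDf'2]
  have hDDf' : D (D f') = H := by
    rw [hDf'2, Derivation.map_smul, hDT, smul_smul]
    norm_num
  have hD'f' : D' f' = 0 := by
    rw [hfS, Derivation.map_smul, hD'S, smul_zero]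
  have hDσf' : D (σ f') = 0 := by
    have h1 := hconj f'
    rw [hD'f'] at h1
    have := congrArg σ h1.symm
    rw [hσσ, map_zero] at this
    exact this
  have hDH : D H = 0 := by
    have hH2 : H = (2:k) • σ f' := by
      rw [hσf', smul_smul]
      norm_num
    rw [hH2, Derivation.map_smul, hDσf', smul_zero]
  have hσH : σ H = (2:k) • f' := by
    have hH2 : H = (2:k) • σ f' := by
      rw [hσf', smul_smul]; norm_num
    rw [hH2, map_smul, hσσ]
  have hfexp : f = (D f') * (D f') - (H * f' + H * f') := by
    have hit : (⇑D)^[2] f' = D (D f') := rfl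
    rw [hf, hit, hDDf']
    ring
  have hσf : σ f = f := by
    rw [hfexp, map_sub, map_add, map_mul, map_mul, hσDf', hσH, hσf']
    have : ((2:k) • f') * ((2:k)⁻¹ • H) = H * f' := by
      rw [smul_mul_smul_comm]
      norm_num
      exact mul_comm _ _
    rw [this]
  have hDf : D f = 0 := by
    rw [hfexp, map_sub, map_add, Derivation.leibniz, Derivation.leibniz,
      hDDf', hDH]
    simp only [smul_eq_mul, smul_zero, add_zero]
    ring
  refine ⟨hσf, ?_⟩
  rw [hconj f, hσf, hDf, map_zero]
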